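/- For any real numbers x > 0, y > 0, r > 0 and dimension d ∈ {1,2,3}, the integral over ℝ^d of (1 + ‖λ‖)^{4r} · ( (x + ‖λ‖²)^{-r} − (y + ‖λ‖²)^{-r} )² dλ is finite. -/

import Mathlib

open MeasureTheory

private lemma aux_mvt (r : ℝ) (hr : 0 < r) {x y t : ℝ} (hx : 0 < x) (hxy : x ≤ y)
    (ht : 0 ≤ t) :
    |(x + t) ^ (-r) - (y + t) ^ (-r)| ≤ r * (y - x) * (x + t) ^ (-r - 1) := by
  have hxt : 0 < x + t := by linarith
  have hderiv : ∀ u ∈ Set.Icc x y,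
      HasDerivWithinAt (fun u : ℝ => (u + t) ^ (-r)) (-r * (u + t) ^ (-r - 1))
        (Set.Icc x y) u := by
    intro u hu
    have hut : 0 < u + t := by have := hu.1; linarith
    have h1 : HasDerivAt (fun v : ℝ => v ^ (-r)) (-r * (u + t) ^ (-r - 1)) (u + t) :=
      Real.hasDerivAt_rpow_const (Or.inl hut.ne')
    have h2 : HasDerivAt (fun u : ℝ => u + t) 1 u := (hasDerivAt_id u).add_const t
    have := h1.comp u h2
    have h3 := this.hasDerivWithinAt (s := Set.Icc x y)
    rw [mul_one] at h3
    exact h3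
  have hbound : ∀ u ∈ Set.Icc x y, ‖-r * (u + t) ^ (-r - 1)‖ ≤ r * (x + t) ^ (-r - 1) := by
    intro u hu
    have hut : 0 < u + t := by have := hu.1; linarith
    have hle : (u + t) ^ (-r - 1) ≤ (x + t) ^ (-r - 1) :=
      Real.rpow_le_rpow_of_nonpos hxt (by linarith [hu.1]) (by linarith)
    have h0 : (0:ℝ) ≤ (u + t) ^ (-r - 1) := Real.rpow_nonneg hut.le _
    rw [norm_mul, norm_neg, Real.norm_of_nonneg hr.le, Real.norm_of_nonneg h0]
    exact mul_le_mul_of_nonneg_left hle hr.le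
  have := Convex.norm_image_sub_le_of_norm_hasDerivWithin_le hderiv hbound
    (convex_Icc x y) (Set.left_mem_Icc.2 hxy) (Set.right_mem_Icc.2 hxy)
  rw [Real.norm_eq_abs, Real.norm_eq_abs, abs_of_nonneg (by linarith : (0:ℝ) ≤ y - x)] at this
  calc |(x + t) ^ (-r) - (y + t) ^ (-r)| = |(y + t) ^ (-r) - (x + t) ^ (-r)| := abs_sub_comm _ _
    _ ≤ r * (x + t) ^ (-r - 1) * (y - x) := this
    _ = r * (y - x) * (x + t) ^ (-r - 1) := by ring

private lemma key_est (r : ℝ) (hr : 0 < r) {x y t : ℝ} (hx : 0 < x) (hy : 0 < y)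
    (ht : 0 ≤ t) :
    |(x + t) ^ (-r) - (y + t) ^ (-r)| ≤ r * |x - y| * (min x y + t) ^ (-r - 1) := by
  rcases le_total x y with h | h
  · rw [min_eq_left h, abs_sub_comm x y, abs_of_nonneg (by linarith : (0:ℝ) ≤ y - x)]
    exact aux_mvt r hr hx h ht
  · rw [min_eq_right h, abs_of_nonneg (by linarith : (0:ℝ) ≤ x - y), abs_sub_comm]
    exact aux_mvt r hr hy h ht

/-- For x, y, r > 0 and d ∈ {1,2,3}, the integral over ℝ^d of
`(1+‖λ‖)^(4r) * ((x+‖λ‖²)^(-r) - (y+‖λ‖²)^(-r))²` is finite. -/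
theorem stmt0 (x y r : ℝ) (hx : 0 < x) (hy : 0 < y) (hr : 0 < r)
    (d : ℕ) (hd : d ∈ ({1, 2, 3} : Set ℕ)) :
    Integrable (fun lam : EuclideanSpace ℝ (Fin d) =>
      (1 + ‖lam‖) ^ (4 * r) *
        ((x + ‖lam‖ ^ 2) ^ (-r) - (y + ‖lam‖ ^ 2) ^ (-r)) ^ 2) := by
  set m : ℝ := min x y with hm
  have hm0 : 0 < m := lt_min hx hy
  set c : ℝ := min m 1 / 2 with hc
  have hc0 : 0 < c := by
    have : 0 < min m 1 := lt_min hm0 one_pos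
    positivity
  set C : ℝ := r ^ 2 * (x - y) ^ 2 * c ^ (-2 * r - 2) with hC
  have hC0 : 0 ≤ C := by positivity
  -- integrability of the dominating function
  have hdim : (Module.finrank ℝ (EuclideanSpace ℝ (Fin d)) : ℝ) < 4 := by
    rw [finrank_euclideanSpace_fin]
    rcases hd with h | h | h <;> simp_all <;> norm_num
  have hg : Integrable (fun lam : EuclideanSpace ℝ (Fin d) =>
      C * (1 + ‖lam‖) ^ (-(4:ℝ))) :=
    (integrable_one_add_norm hdim).const_mul C
  apply hg.mono'
  · -- measurability
    apply Continuous.aestronglyMeasurable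
    apply Continuous.mul
    · exact (continuous_const.add continuous_norm).rpow_const
        (fun lam => Or.inr (by positivity))
    · apply Continuous.pow
      apply Continuous.sub
      · exact (continuous_const.add (continuous_norm.pow 2)).rpow_const
          (fun lam => Or.inl (by show x + ‖lam‖ ^ 2 ≠ 0; positivity))
      · exact (continuous_const.add (continuous_norm.pow 2)).rpow_const
          (fun lam => Or.inl (by show y + ‖lam‖ ^ 2 ≠ 0; positivity))
  · filter_upwards with lam
    set s : ℝ := ‖lam‖ with hs
    have hs0 : 0 ≤ s := norm_nonneg _
    have h1s : 0 < 1 + s := by linarith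
    have hms : 0 < m + s ^ 2 := by positivity
    -- pointwise bound
    have hkey := key_est r hr hx hy (t := s ^ 2) (by positivity)
    have habs : ((x + s ^ 2) ^ (-r) - (y + s ^ 2) ^ (-r)) ^ 2 ≤
        (r * |x - y| * (m + s ^ 2) ^ (-r - 1)) ^ 2 := by
      rw [← sq_abs]
      apply pow_le_pow_left₀ (abs_nonneg _) hkey
    have hrpow2 : ((m + s ^ 2) ^ (-r - 1)) ^ 2 = (m + s ^ 2) ^ (-2 * r - 2) := by
      rw [← Real.rpow_natCast ((m + s ^ 2) ^ (-r - 1)) 2, ← Real.rpow_mul hms.le]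
      norm_num
      ring_nf
    -- comparison of bases
    have hbase : c * (1 + s) ^ 2 ≤ m + s ^ 2 := by
      have h1 : min m 1 ≤ m := min_le_left _ _
      have h2 : min m 1 ≤ 1 := min_le_right _ _
      have h3 : 0 < min m 1 := lt_min hm0 one_pos
      have h4 : 2 * s ≤ 1 + s ^ 2 := by nlinarith [sq_nonneg (s - 1)]
      nlinarith [sq_nonneg s, sq_nonneg (s-1)]
    have hbasepos : 0 < c * (1 + s) ^ 2 := by positivity
    have hstep : (m + s ^ 2) ^ (-2 * r - 2) ≤ (c * (1 + s) ^ 2) ^ (-2 * r - 2) :=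
      Real.rpow_le_rpow_of_nonpos hbasepos hbase (by linarith)
    have hsplit : (c * (1 + s) ^ 2) ^ (-2 * r - 2) =
        c ^ (-2 * r - 2) * (1 + s) ^ (-4 * r - 4) := by
      rw [Real.mul_rpow hc0.le (by positivity),
        ← Real.rpow_natCast (1 + s) 2, ← Real.rpow_mul h1s.le]
      congr 1
      push_cast
      ring
    have hmerge : (1 + s) ^ (4 * r) * (1 + s) ^ (-4 * r - 4) = (1 + s) ^ (-(4:ℝ)) := by
      rw [← Real.rpow_add h1s]
      ring_nf
    have hpow4r : (0:ℝ) ≤ (1 + s) ^ (4 * r) := Real.rpow_nonneg h1s.le _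
    have hfinal : (1 + s) ^ (4 * r) *
        ((x + s ^ 2) ^ (-r) - (y + s ^ 2) ^ (-r)) ^ 2 ≤ C * (1 + s) ^ (-(4:ℝ)) := by
      calc (1 + s) ^ (4 * r) * ((x + s ^ 2) ^ (-r) - (y + s ^ 2) ^ (-r)) ^ 2
          ≤ (1 + s) ^ (4 * r) * (r * |x - y| * (m + s ^ 2) ^ (-r - 1)) ^ 2 :=
            mul_le_mul_of_nonneg_left habs hpow4r
        _ = (1 + s) ^ (4 * r) * (r ^ 2 * (x - y) ^ 2 * (m + s ^ 2) ^ (-2 * r - 2)) := by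
            rw [mul_pow, mul_pow, sq_abs, hrpow2]
        _ ≤ (1 + s) ^ (4 * r) * (r ^ 2 * (x - y) ^ 2 * (c ^ (-2 * r - 2) * (1 + s) ^ (-4 * r - 4))) := by
            apply mul_le_mul_of_nonneg_left _ hpow4r
            rw [← hsplit]
            exact mul_le_mul_of_nonneg_left hstep (by positivity)
        _ = C * ((1 + s) ^ (4 * r) * (1 + s) ^ (-4 * r - 4)) := by rw [hC]; ring
        _ = C * (1 + s) ^ (-(4:ℝ)) := by rw [hmerge]
    have hnonneg : 0 ≤ (1 + s) ^ (4 * r) *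
        ((x + s ^ 2) ^ (-r) - (y + s ^ 2) ^ (-r)) ^ 2 := by positivity
    rw [Real.norm_of_nonneg hnonneg]
    exact hfinal
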